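/- Let K be a compact Hausdorff space equipped with a circular order whose circular topology τ∘ coincides with the topology of K. Then the set of homeomorphisms f of K satisfying sbtw a b c → sbtw (f a) (f b) (f c) for all a, b, c ∈ K is a closed subset of the set of all homeomorphisms of K, both regarded as subsets of C(K,K) with the compact-open topology. -/
import Mathlib


/-- The closed interval `[a,b]∘ = {x | sbtw a x b} ∪ {a, b}` of a circularly ordered set. -/
def cIcc {X : Type*} [CircularOrder X] (a b : X) : Set X :=
  {x | sbtw a x b} ∪ {a, b}

/-- The circular (interval) topology of a circular order: the topology generated by the
complements of the closed intervals `[a,b]∘`. -/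
def circularTopology (X : Type*) [CircularOrder X] : TopologicalSpace X :=
  TopologicalSpace.generateFrom {s : Set X | ∃ a b : X, s = (cIcc a b)ᶜ}

section Toolkit
variable {α : Type*} [CircularOrder α]

lemma sbtw_ne_left {a b c : α} (h : sbtw a b c) : a ≠ b :=
  fun e => sbtw_irrefl_left (e ▸ h)

lemma sbtw_ne_right {a b c : α} (h : sbtw a b c) : b ≠ c :=
  fun e => sbtw_irrefl_right (e ▸ h)

lemma sbtw_ne_outer {a b c : α} (h : sbtw a b c) : a ≠ c :=
  fun e => sbtw_irrefl_left_right (e ▸ h)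

lemma sbtw_of_btw_of_ne {a b c : α} (h : btw a b c) (hab : a ≠ b) (hbc : b ≠ c)
    (hca : c ≠ a) : sbtw a b c := by
  refine h.sbtw_of_not_btw fun h' => ?_
  rcases h.antisymm h' with e | e | e
  · exact hab e
  · exact hbc e
  · exact hca e

lemma sbtw_total {a b o : α} (hab : a ≠ b) (hao : a ≠ o) (hbo : b ≠ o) :
    sbtw o a b ∨ sbtw o b a := by
  rcases btw_total o a b with h | h
  · exact Or.inl (sbtw_of_btw_of_ne h (Ne.symm hao) hab hbo)
  · exact Or.inr (sbtw_of_btw_of_ne h.cyclic_right (Ne.symm hbo) hab.symm hao)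

/-- If `o,u,v` and `o,v,w` are in cyclic order, then so are `u,v,w`. -/
lemma sbtw_of_sbtw_of_sbtw {o u v w : α} (h1 : sbtw o u v) (h2 : sbtw o v w) :
    sbtw u v w := by
  have a1 : sbtw v o u := h1.cyclic_left.cyclic_left
  have a2 : sbtw v w o := h2.cyclic_left
  exact (a2.trans_right a1).cyclic_left.cyclic_left

/-- `u,v,w` cyclic, `t ∈ (v,w)` implies `u,v,t` cyclic. -/
lemma sbtw_extend {u v w t : α} (h1 : sbtw u v w) (h2 : sbtw v t w) : sbtw u v t :=
  (h2.trans_right h1.cyclic_left).cyclic_right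

lemma sbtw_core {o s₁ t₁ s₂ t₂ x y z : α}
    (e1 : ∀ w, ¬ sbtw s₁ w t₁) (e2 : ∀ w, ¬ sbtw s₂ w t₂)
    (F1 : sbtw o s₁ t₁ ∨ s₁ = t₁)
    (F2 : sbtw t₂ o s₁ ∨ o = t₂)
    (F3 : sbtw o s₂ t₂ ∨ s₂ = t₂ ∨ o = t₂)
    (hx : sbtw o x t₁) (hy : sbtw s₁ y t₂) (hz : sbtw s₂ z o ∨ z = o) :
    sbtw x y z := by
  have N1 : sbtw s₁ y o := by
    rcases F2 with ht2 | rfl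
    · exact hy.trans_right (ht2.cyclic_left.cyclic_left)
    · exact hy
  have os₁y : sbtw o s₁ y := N1.cyclic_left.cyclic_left
  have oxs₁ : sbtw o x s₁ ∨ x = s₁ := by
    rcases F1 with hos | h
    · by_cases hxs : x = s₁
      · exact Or.inr hxs
      · rcases sbtw_total hxs (sbtw_ne_left hx).symm (sbtw_ne_left hos).symm with h | h
        · exact Or.inl h
        · exact absurd (sbtw_of_sbtw_of_sbtw h hx) (e1 x)
    · exact Or.inl (h ▸ hx)
  have oxy : sbtw o x y := by
    rcases oxs₁ with h | rfl
    · exact h.trans_right os₁y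
    · exact os₁y
  rcases hz with hzo | rfl
  · rcases F2 with ht2 | rfl
    · have hyt : sbtw o y t₂ := ht2.cyclic_left.trans_left hy
      have oys₂ : sbtw o y s₂ ∨ y = s₂ := by
        rcases F3 with hos2 | rfl | rfl
        · by_cases hys : y = s₂
          · exact Or.inr hys
          · rcases sbtw_total hys (sbtw_ne_left hyt).symm (sbtw_ne_left hos2).symm with h | h
            · exact Or.inl h
            · exact absurd (sbtw_of_sbtw_of_sbtw h hyt) (e2 y)
        · exact Or.inl hyt
        · exact absurd ht2 sbtw_irrefl_left
      have os₂z : sbtw o s₂ z := hzo.cyclic_left.cyclic_left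
      have oyz : sbtw o y z := by
        rcases oys₂ with h | rfl
        · exact h.trans_right os₂z
        · exact os₂z
      exact sbtw_of_sbtw_of_sbtw oxy oyz
    · exact absurd hzo (e2 z)
  · exact oxy.cyclic_left

/-- For any two points, choose the endpoints of an "empty gap": either a midpoint (twice), or
the pair itself if the open interval between them is empty. -/
lemma edge_choice (u v : α) : ∃ s t : α, (∀ x, ¬sbtw s x t) ∧
    ((sbtw u s v ∧ s = t) ∨ (s = u ∧ t = v)) := by
  by_cases he : ∃ m, sbtw u m v
  · obtain ⟨m, hm⟩ := he
    exact ⟨m, m, fun x hx => sbtw_irrefl_left_right hx, Or.inl ⟨hm, rfl⟩⟩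
  · exact ⟨u, v, fun x hx => he ⟨x, hx⟩, Or.inr ⟨rfl, rfl⟩⟩

lemma sbtw_arcs_aux {a b c o s₁ t₁ s₂ t₂ vW : α} (h : sbtw a b c)
    (e1 : ∀ w, ¬sbtw s₁ w t₁) (d1 : (sbtw a s₁ b ∧ s₁ = t₁) ∨ (s₁ = a ∧ t₁ = b))
    (e2 : ∀ w, ¬sbtw s₂ w t₂) (d2 : (sbtw b s₂ c ∧ s₂ = t₂) ∨ (s₂ = b ∧ t₂ = c))
    (hoab : sbtw o a b)
    (hto : sbtw t₂ o a ∨ o = t₂)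
    (hobc : sbtw o b c ∨ o = c)
    (hWz : ∀ z, sbtw s₂ z vW → sbtw s₂ z o ∨ z = o) :
    sbtw o a t₁ ∧ sbtw s₁ b t₂ ∧
      ∀ x y z, sbtw o x t₁ → sbtw s₁ y t₂ → sbtw s₂ z vW → sbtw x y z := by
  have habt₂ : sbtw a b t₂ := by
    rcases d2 with ⟨hm2, rfl⟩ | ⟨rfl, rfl⟩
    · exact sbtw_extend h hm2
    · exact h
  have hx : sbtw o a t₁ := by
    rcases d1 with ⟨hm1, rfl⟩ | ⟨rfl, rfl⟩
    · exact sbtw_extend hoab hm1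
    · exact hoab
  have hy : sbtw s₁ b t₂ := by
    rcases d1 with ⟨hm1, rfl⟩ | ⟨rfl, rfl⟩
    · exact sbtw_of_sbtw_of_sbtw hm1 habt₂
    · exact habt₂
  have F1 : sbtw o s₁ t₁ ∨ s₁ = t₁ := by
    rcases d1 with ⟨hm1, heq⟩ | ⟨rfl, rfl⟩
    · exact Or.inr heq
    · exact Or.inl hoab
  have F2 : sbtw t₂ o s₁ ∨ o = t₂ := by
    rcases hto with hta | heq
    · rcases d1 with ⟨hm1, heq⟩ | ⟨rfl, rfl⟩
      · have ham₁t₂ : sbtw a s₁ t₂ := hm1.trans_right habt₂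
        exact Or.inl (hta.trans_right ham₁t₂.cyclic_right)
      · exact Or.inl hta
    · exact Or.inr heq
  have F3 : sbtw o s₂ t₂ ∨ s₂ = t₂ ∨ o = t₂ := by
    rcases d2 with ⟨hm2, heq⟩ | ⟨rfl, rfl⟩
    · exact Or.inr (Or.inl heq)
    · rcases hobc with hbc' | rfl
      · exact Or.inl hbc'
      · exact Or.inr (Or.inr rfl)
  refine ⟨hx, hy, fun x y z hx' hy' hz' => ?_⟩
  exact sbtw_core e1 e2 F1 F2 F3 hx' hy' (hWz z hz')

/-- Key combinatorial lemma: any cyclically ordered triple can be separated by three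
open arcs whose points are always in cyclic order. -/
lemma sbtw_arcs {a b c : α} (h : sbtw a b c) :
    ∃ u₁ v₁ u₂ v₂ u₃ v₃ : α, sbtw u₁ a v₁ ∧ sbtw u₂ b v₂ ∧ sbtw u₃ c v₃ ∧
      ∀ x y z, sbtw u₁ x v₁ → sbtw u₂ y v₂ → sbtw u₃ z v₃ → sbtw x y z := by
  obtain ⟨s₁, t₁, e1, d1⟩ := edge_choice a b
  obtain ⟨s₂, t₂, e2, d2⟩ := edge_choice b c
  by_cases he3 : ∃ m, sbtw c m a
  · obtain ⟨o, hm⟩ := he3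
    have hoab : sbtw o a b := sbtw_of_sbtw_of_sbtw hm h.cyclic_right
    have hbco : sbtw b c o := sbtw_extend h.cyclic_left hm
    have hto : sbtw t₂ o a ∨ o = t₂ := by
      rcases d2 with ⟨hm2, rfl⟩ | ⟨rfl, rfl⟩
      · have hm₂ca : sbtw s₂ c a := sbtw_of_sbtw_of_sbtw hm2 h.cyclic_left
        exact Or.inl (hm₂ca.trans_left hm)
      · exact Or.inl hm
    have hobc : sbtw o b c ∨ o = c := Or.inl (hbco.cyclic_left.cyclic_left)
    have hcW : sbtw s₂ c o := by
      rcases d2 with ⟨hm2, rfl⟩ | ⟨rfl, rfl⟩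
      · exact sbtw_extend (sbtw_of_sbtw_of_sbtw hm2 h.cyclic_left) hm
      · exact hbco
    obtain ⟨hx, hy, hmain⟩ :=
      sbtw_arcs_aux h e1 d1 e2 d2 hoab hto hobc (fun z hz => Or.inl hz)
    exact ⟨o, t₁, s₁, t₂, s₂, o, hx, hy, hcW, hmain⟩
  · have e3 : ∀ w, ¬ sbtw c w a := fun w hw => he3 ⟨w, hw⟩
    have hoab : sbtw c a b := h.cyclic_right
    have hto : sbtw t₂ c a ∨ c = t₂ := by
      rcases d2 with ⟨hm2, rfl⟩ | ⟨rfl, rfl⟩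
      · exact Or.inl (sbtw_of_sbtw_of_sbtw hm2 h.cyclic_left)
      · exact Or.inr rfl
    have hs₂c : s₂ ≠ c := by
      rcases d2 with ⟨hm2, heq⟩ | ⟨rfl, heq⟩
      · exact sbtw_ne_right hm2
      · exact sbtw_ne_right h
    have hcW : sbtw s₂ c a := by
      rcases d2 with ⟨hm2, rfl⟩ | ⟨rfl, rfl⟩
      · exact sbtw_of_sbtw_of_sbtw hm2 h.cyclic_left
      · exact h.cyclic_left
    have hWz : ∀ z, sbtw s₂ z a → sbtw s₂ z c ∨ z = c := by
      intro z hz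
      by_cases hzc : z = c
      · exact Or.inr hzc
      · rcases sbtw_total hzc (sbtw_ne_left hz).symm hs₂c.symm with h' | h'
        · exact Or.inl h'
        · exact absurd (sbtw_of_sbtw_of_sbtw h' hz) (e3 z)
    obtain ⟨hx, hy, hmain⟩ :=
      sbtw_arcs_aux h e1 d1 e2 d2 hoab hto (Or.inr rfl) hWz
    exact ⟨c, t₁, s₁, t₂, s₂, a, hx, hy, hcW, hmain⟩

end Toolkit

section Top
variable {K : Type*} [CircularOrder K] [ts : TopologicalSpace K]

lemma isOpen_sbtw (hts : ts = circularTopology K) {u v : K} (huv : u ≠ v) :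
    IsOpen {x : K | sbtw u x v} := by
  rw [hts]
  apply TopologicalSpace.GenerateOpen.basic
  refine ⟨v, u, ?_⟩
  ext x
  simp only [cIcc, Set.mem_setOf_eq, Set.mem_compl_iff, Set.mem_union, Set.mem_insert_iff,
    Set.mem_singleton_iff, not_or]
  constructor
  · intro h
    exact ⟨sbtw_asymm h, sbtw_ne_right h, (sbtw_ne_left h).symm⟩
  · rintro ⟨h1, h2, h3⟩
    rcases btw_total u x v with h | h
    · exact sbtw_of_btw_of_ne h (Ne.symm h3) h2 huv.symm
    · exact absurd (sbtw_of_btw_of_ne h (Ne.symm h2) h3 huv) h1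

end Top

/-- Let `K` be a compact Hausdorff space with a circular order whose circular
topology coincides with its topology. Then the set of homeomorphisms of `K` preserving strict
betweenness is closed in the set of all homeomorphisms of `K`, both viewed as subsets of
`C(K,K)` with the compact-open topology. -/
theorem cop_homeos_closed_in_homeos
    {K : Type*} [CircularOrder K] [ts : TopologicalSpace K]
    [CompactSpace K] [T2Space K] (hts : ts = circularTopology K) :
    IsClosed {f : {g : C(K, K) // IsHomeomorph g} |
      ∀ a b c : K, sbtw a b c → sbtw ((f : C(K, K)) a) ((f : C(K, K)) b) ((f : C(K, K)) c)} := by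
  rw [← isOpen_compl_iff]
  rw [isOpen_iff_forall_mem_open]
  rintro f hf
  simp only [Set.mem_compl_iff, Set.mem_setOf_eq, not_forall] at hf
  obtain ⟨a, b, c, habc, hnot⟩ := hf
  have hinj := f.2.injective
  have hrev : sbtw ((f : C(K, K)) a) ((f : C(K, K)) c) ((f : C(K, K)) b) := by
    rcases sbtw_total (fun e => sbtw_ne_right habc (hinj e))
      (fun e => sbtw_ne_left habc (hinj e).symm)
      (fun e => sbtw_ne_outer habc (hinj e).symm) with h' | h'
    · exact absurd h' hnot
    · exact h'
  obtain ⟨u₁, v₁, u₂, v₂, u₃, v₃, hfa, hfc, hfb, hprod⟩ := sbtw_arcs hrev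
  have hU : IsOpen {x : K | sbtw u₁ x v₁} := isOpen_sbtw hts (sbtw_ne_outer hfa)
  have hV : IsOpen {x : K | sbtw u₂ x v₂} := isOpen_sbtw hts (sbtw_ne_outer hfc)
  have hW : IsOpen {x : K | sbtw u₃ x v₃} := isOpen_sbtw hts (sbtw_ne_outer hfb)
  have heva : Continuous fun g : {g : C(K, K) // IsHomeomorph g} => (g : C(K, K)) a :=
    (continuous_eval_const a).comp continuous_subtype_val
  have hevb : Continuous fun g : {g : C(K, K) // IsHomeomorph g} => (g : C(K, K)) b :=
    (continuous_eval_const b).comp continuous_subtype_val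
  have hevc : Continuous fun g : {g : C(K, K) // IsHomeomorph g} => (g : C(K, K)) c :=
    (continuous_eval_const c).comp continuous_subtype_val
  refine ⟨{g : {g : C(K, K) // IsHomeomorph g} |
      sbtw u₁ ((g : C(K, K)) a) v₁ ∧ sbtw u₃ ((g : C(K, K)) b) v₃ ∧
      sbtw u₂ ((g : C(K, K)) c) v₂}, ?_, ?_, hfa, hfb, hfc⟩
  · rintro g ⟨hga, hgb, hgc⟩
    have hg : sbtw ((g : C(K, K)) a) ((g : C(K, K)) c) ((g : C(K, K)) b) :=
      hprod _ _ _ hga hgc hgb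
    simp only [Set.mem_compl_iff, Set.mem_setOf_eq, not_forall]
    exact ⟨a, b, c, habc, fun h' => sbtw_asymm hg h'.cyclic_left⟩
  · exact ((hU.preimage heva).inter ((hW.preimage hevb).inter (hV.preimage hevc)))
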